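/- Let H be a complex Hilbert space and let T be a hyponormal bounded linear operator on H. Then for every x in H, |⟨Tx, x⟩| ≤ ⟨|T|x, x⟩, where |T| denotes the absolute value of T. -/

import Mathlib

open ComplexOrder ContinuousLinearMap

set_option maxHeartbeats 1000000

section CStarAux

section CStarAux

variable {A : Type*} [CStarAlgebra A] [PartialOrder A] [StarOrderedRing A]

lemma my_sq_le_sq_of_isUnit {a : A} {b : Aˣ} (ha : 0 ≤ a) (hb : 0 ≤ (b : A))
    (h : a * a ≤ (b : A) * (b : A)) : a ≤ (b : A) := by
  obtain hA | hA := subsingleton_or_nontrivial A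
  · exact (Subsingleton.elim a (b : A)).le
  set v : A := ((b⁻¹ : Aˣ) : A) with hv
  have hsb : star (b : A) = (b : A) := IsSelfAdjoint.of_nonneg hb
  have hsa : star a = a := IsSelfAdjoint.of_nonneg ha
  have hsv : star v = v := by
    calc star v = star v * ((b : A) * v) := by rw [hv, b.mul_inv, mul_one]
      _ = star v * star (b : A) * v := by rw [hsb, mul_assoc]
      _ = star ((b : A) * v) * v := by rw [star_mul, hsb]
      _ = v := by rw [hv, b.mul_inv, star_one, one_mul]
  have hvnn : (0 : A) ≤ v := by
    have h0 := star_left_conjugate_nonneg hb v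
    rw [hsv] at h0
    calc (0 : A) ≤ v * ↑b * v := h0
      _ = v * (↑b * v) := by rw [mul_assoc]
      _ = v := by rw [hv, b.mul_inv, mul_one]
  have haa : (0 : A) ≤ a * a := by
    have h0 := star_mul_self_nonneg a; rwa [hsa] at h0
  have hconj : v * (a * a) * v ≤ 1 := by
    have h0 := star_left_conjugate_le_conjugate h v
    rw [hsv] at h0
    refine h0.trans_eq ?_
    calc v * ((b : A) * (b : A)) * v = (v * (b : A)) * ((b : A) * v) := by
          simp only [mul_assoc]
      _ = 1 := by rw [hv, b.inv_mul, b.mul_inv, one_mul]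
  have habinv : ‖a * v‖ ≤ 1 := by
    have h1 : ‖a * v‖ * ‖a * v‖ = ‖v * (a * a) * v‖ := by
      rw [← CStarRing.norm_star_mul_self (x := a * v)]
      congr 1
      rw [star_mul, hsa, hsv]
      noncomm_ring
    have h2 : (0 : A) ≤ v * (a * a) * v := by
      have h0 := star_left_conjugate_nonneg haa v
      rwa [hsv] at h0
    have h3 : ‖v * (a * a) * v‖ ≤ 1 := by
      calc ‖v * (a * a) * v‖ ≤ ‖(1 : A)‖ := CStarAlgebra.norm_le_norm_of_nonneg_of_le h2 hconj
        _ = 1 := norm_one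
    nlinarith [norm_nonneg (a * v)]
  -- now the sqrt criterion
  rw [le_iff_norm_sqrt_mul_sqrt_inv ha hb]
  set s : A := CFC.sqrt v with hs
  have hsnn : (0 : A) ≤ s := CFC.sqrt_nonneg v
  have hss' : star s = s := IsSelfAdjoint.of_nonneg hsnn
  have hsann : (0 : A) ≤ CFC.sqrt a := CFC.sqrt_nonneg a
  have hsa' : star (CFC.sqrt a) = CFC.sqrt a := IsSelfAdjoint.of_nonneg hsann
  have hss : s * s = v := CFC.sqrt_mul_sqrt_self v hvnn
  have hsq : CFC.sqrt a * CFC.sqrt a = a := CFC.sqrt_mul_sqrt_self a ha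
  set u : A := CFC.sqrt a * s with hu
  set c : A := s * a * s with hc
  have hcsa : IsSelfAdjoint c := by
    show star c = c
    rw [hc, star_mul, star_mul, hsa, hss']
    noncomm_ring
  have hnormc : ‖c‖ ≤ ‖a * v‖ := by
    have hrad : spectralRadius ℂ c ≤ (‖a * v‖₊ : ENNReal) := by
      rw [spectralRadius]
      refine iSup₂_le fun k hk => ?_
      rcases eq_or_ne k 0 with rfl | hk0
      · simp
      · have hk' : k ∈ spectrum ℂ (a * v) := by
          have e1 : c = s * (a * s) := by rw [hc]; noncomm_ring
          have h1 : k ∈ spectrum ℂ ((a * s) * s) \ {0} := by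
            rw [← spectrum.nonzero_mul_comm]
            exact ⟨e1 ▸ hk, hk0⟩
          have e2 : (a * s) * s = a * v := by rw [mul_assoc, hss]
          exact (e2 ▸ h1).1
        exact_mod_cast spectrum.norm_le_norm_of_mem hk'
    have h0 := ENNReal.toReal_mono (by simp) hrad
    rwa [IsSelfAdjoint.toReal_spectralRadius_complex_eq_norm hcsa, ENNReal.coe_toReal,
      coe_nnnorm] at h0
  have hnormu : ‖u‖ * ‖u‖ = ‖c‖ := by
    rw [← CStarRing.norm_star_mul_self (x := u)]
    congr 1
    rw [hu, star_mul, hsa', hss', hc]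
    calc s * CFC.sqrt a * (CFC.sqrt a * s) = s * (CFC.sqrt a * CFC.sqrt a) * s := by noncomm_ring
      _ = s * a * s := by rw [hsq]
  have hfin : ‖u‖ * ‖u‖ ≤ 1 := by
    rw [hnormu]; exact hnormc.trans habinv
  nlinarith [norm_nonneg u]

lemma my_sq_le_sq {a b : A} (ha : 0 ≤ a) (hb : 0 ≤ b)
    (h : a * a ≤ b * b) : a ≤ b := by
  have key : ∀ δ : ℝ, 0 < δ → a ≤ b + algebraMap ℝ A δ := by
    intro δ hδ
    have hd : (0 : A) ≤ algebraMap ℝ A δ := by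
      rw [Algebra.algebraMap_eq_smul_one]
      exact smul_nonneg hδ.le zero_le_one
    have hunit : IsUnit (b + algebraMap ℝ A δ) := by
      refine CStarAlgebra.isUnit_of_le _ ?_
        ((IsUnit.map (algebraMap ℝ A) (isUnit_iff_ne_zero.2 hδ.ne')).isStrictlyPositive hd)
      calc algebraMap ℝ A δ = 0 + algebraMap ℝ A δ := by rw [zero_add]
        _ ≤ b + algebraMap ℝ A δ := add_le_add_left hb _
    obtain ⟨bδ, hbδ⟩ := hunit
    have hbδnn : (0 : A) ≤ (bδ : A) := hbδ ▸ add_nonneg hb hd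
    have hsq : a * a ≤ (bδ : A) * (bδ : A) := by
      rw [hbδ]
      refine h.trans ?_
      have e : (b + algebraMap ℝ A δ) * (b + algebraMap ℝ A δ)
          = b * b + (δ • b + δ • (b + algebraMap ℝ A δ)) := by
        simp only [Algebra.algebraMap_eq_smul_one, mul_add, add_mul, smul_mul_assoc,
          mul_smul_comm, mul_one, one_mul, smul_smul, smul_add]
        abel
      rw [e]
      have h1 : (0 : A) ≤ δ • b := smul_nonneg hδ.le hb
      have h2 : (0 : A) ≤ δ • (b + algebraMap ℝ A δ) := smul_nonneg hδ.le (add_nonneg hb hd)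
      exact le_add_of_nonneg_right (add_nonneg h1 h2)
    exact hbδ ▸ my_sq_le_sq_of_isUnit ha hbδnn hsq
  -- take the limit δ → 0
  have htend : Filter.Tendsto (fun n : ℕ => b + algebraMap ℝ A (1 / (n + 1)))
      Filter.atTop (nhds b) := by
    have h0 : Filter.Tendsto (fun n : ℕ => (1 : ℝ) / (n + 1)) Filter.atTop (nhds 0) :=
      tendsto_one_div_add_atTop_nhds_zero_nat
    have hcont : Continuous (fun t : ℝ => b + algebraMap ℝ A t) :=
      continuous_const.add (continuous_algebraMap ℝ A)
    have h1 := (hcont.tendsto 0).comp h0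
    simpa [Function.comp_def] using h1
  exact ge_of_tendsto' htend fun n => key _ (by positivity)

end CStarAux

section Main

variable {H : Type*} [NormedAddCommGroup H] [InnerProductSpace ℂ H] [CompleteSpace H]

-- convert complex-inner positivity to Loewner order
lemma my_nonneg_of_inner {S : H →L[ℂ] H} (h : ∀ x : H, 0 ≤ (inner ℂ (S x) x : ℂ)) :
    (0 : H →L[ℂ] H) ≤ S := by
  rw [ContinuousLinearMap.nonneg_iff_isPositive, isPositive_iff_complex]
  intro y
  obtain ⟨h1, h2⟩ := Complex.nonneg_iff.mp (h y)
  refine ⟨?_, by simpa using h1⟩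
  apply Complex.ext <;> simp [← h2]

lemma my_inner_re_le {S₁ S₂ : H →L[ℂ] H} (h : S₁ ≤ S₂) (x : H) :
    (inner ℂ (S₁ x) x : ℂ).re ≤ (inner ℂ (S₂ x) x : ℂ).re := by
  rw [ContinuousLinearMap.le_def] at h
  have h0 := h.2 x
  rw [ContinuousLinearMap.reApplyInnerSelf_apply] at h0
  simp only [ContinuousLinearMap.sub_apply, inner_sub_left] at h0
  simp only [map_sub, RCLike.re_to_complex] at h0
  linarith [h0]

end Main

theorem abs_inner_le_of_hyponormal_key
    {H : Type*} [NormedAddCommGroup H] [InnerProductSpace ℂ H] [CompleteSpace H]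
    (T B : H →L[ℂ] H) (hBpos : (0:H →L[ℂ] H) ≤ B)
    (hTT : T * star T ≤ star T * T) (hB2' : star T * T = B * B)
    (x : H) (ε : ℝ) (hε : 0 < ε) :
    (‖(inner ℂ (T x) x : ℂ)‖)^2
      ≤ ((inner ℂ (B x) x : ℂ).re + ε * ‖x‖^2) * (inner ℂ (B x) x : ℂ).re := by
  have hBsa : IsSelfAdjoint B := .of_nonneg hBpos
  have hspec : ∀ t ∈ spectrum ℝ B, 0 ≤ t := fun t ht => spectrum_nonneg_of_nonneg hBpos ht
  have hne : ∀ t ∈ spectrum ℝ B, t + ε ≠ 0 := fun t ht => by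
    have := hspec t ht; positivity
  have hcR : ContinuousOn (fun t : ℝ => (t+ε)⁻¹) (spectrum ℝ B) :=
    ContinuousOn.inv₀ (by fun_prop) hne
  have hcS : ContinuousOn (fun t : ℝ => Real.sqrt (t+ε)) (spectrum ℝ B) := by fun_prop
  set R := cfc (fun t : ℝ => (t+ε)⁻¹) B with hR
  set S := cfc (fun t : ℝ => Real.sqrt (t+ε)) B with hS
  set Bε := B + algebraMap ℝ (H →L[ℂ] H) ε with hBε
  have hBε_cfc : Bε = cfc (fun t : ℝ => t + ε) B := by
    rw [cfc_add_const ε (fun t : ℝ => t) B (by fun_prop) hBsa, cfc_id' ℝ B]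
  have hR_Bε : R * Bε = 1 := by
    rw [hBε_cfc, hR, ← cfc_mul _ _ B hcR (by fun_prop)]
    calc cfc (fun t : ℝ => (t+ε)⁻¹ * (t+ε)) B = cfc (fun _ : ℝ => (1:ℝ)) B :=
          cfc_congr fun t ht => inv_mul_cancel₀ (hne t ht)
      _ = 1 := by rw [cfc_const 1 B hBsa, map_one]
  have hSS : S * S = Bε := by
    rw [hBε_cfc, hS, ← cfc_mul _ _ B hcS hcS]
    exact cfc_congr fun t ht => Real.mul_self_sqrt (by have := hspec t ht; linarith)
  have hRnn : (0:H →L[ℂ] H) ≤ R := cfc_nonneg fun t ht => by have h0 := hspec t ht; have h1 : (0:ℝ) < t + ε := (by linarith); positivity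
  have hSsa : IsSelfAdjoint S := cfc_predicate _ B
  have hRsa : IsSelfAdjoint R := cfc_predicate _ B
  have h_RBBR : cfc (fun t : ℝ => (t+ε)⁻¹ * (t * t) * (t+ε)⁻¹) B = R * (B * B) * R := by
    rw [cfc_mul (fun t : ℝ => (t+ε)⁻¹ * (t * t)) (fun t : ℝ => (t+ε)⁻¹) B (by fun_prop) hcR,
      cfc_mul (fun t : ℝ => (t+ε)⁻¹) (fun t : ℝ => t * t) B hcR (by fun_prop),
      cfc_mul (fun t : ℝ => t) (fun t : ℝ => t) B (by fun_prop) (by fun_prop),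
      cfc_id' ℝ B]
  have hg1 : cfc (fun t : ℝ => (t+ε)⁻¹ * (t * t) * (t+ε)⁻¹) B ≤ 1 := by
    refine cfc_le_one _ _ fun t ht => ?_
    have h0 := hspec t ht
    have h1 : (t+ε)⁻¹ * (t*t) * (t+ε)⁻¹ = (t * (t+ε)⁻¹)^2 := by ring
    rw [h1]
    have h2 : t * (t+ε)⁻¹ ≤ 1 := by
      rw [← div_eq_mul_inv]
      exact div_le_one_of_le₀ (by linarith) (by positivity)
    have h3 : 0 ≤ t * (t+ε)⁻¹ := by positivity
    nlinarith
  -- the contraction part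
  set D := T * R * star T with hD
  have hD0 : (0:H →L[ℂ] H) ≤ D := by
    have h0 := star_left_conjugate_nonneg hRnn (star T)
    rwa [star_star, ← hD] at h0
  have hDD : D * D ≤ B * B := by
    have e1 : D * D = T * (R * (B * B) * R) * star T := by
      rw [hD]
      have e2 : T * R * star T * (T * R * star T) = T * R * (star T * T) * R * star T := by
        noncomm_ring
      rw [e2, hB2']
      noncomm_ring
    rw [e1, ← h_RBBR]
    calc T * cfc (fun t : ℝ => (t+ε)⁻¹ * (t * t) * (t+ε)⁻¹) B * star T
        ≤ T * 1 * star T := star_right_conjugate_le_conjugate hg1 T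
      _ = T * star T := by rw [mul_one]
      _ ≤ star T * T := hTT
      _ = B * B := hB2'
  have hDB : D ≤ B := my_sq_le_sq hD0 hBpos hDD
  -- the operator W and adjoint identities
  set W := T * R with hW
  have hWsa : star W = R * star T := by rw [hW, star_mul, hRsa.star_eq]
  have hWBε : W * Bε = T := by rw [hW, mul_assoc, hR_Bε, mul_one]
  have hD_eq : W * Bε * star W = D := by
    rw [hWBε, hWsa, hD, ← mul_assoc]
  have hSadj : adjoint S = S := by rw [← star_eq_adjoint]; exact hSsa.star_eq
  set y := adjoint W x with hy
  -- inner product identities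
  have e_T : (inner ℂ (T x) x : ℂ) = inner ℂ (S x) (S y) := by
    have h1 : T x = W (Bε x) := by rw [← hWBε, mul_apply_eq_comp]
    have h2 : Bε x = S (S x) := by rw [← hSS, mul_apply_eq_comp]
    calc (inner ℂ (T x) x : ℂ) = inner ℂ (W (Bε x)) x := by rw [← h1]
      _ = inner ℂ (Bε x) (adjoint W x) := (adjoint_inner_right W (Bε x) x).symm
      _ = inner ℂ (adjoint S (S x)) y := by rw [h2, hSadj, hy]
      _ = inner ℂ (S x) (S y) := adjoint_inner_left S y (S x)
  have hSx2 : ‖S x‖^2 = (inner ℂ (B x) x : ℂ).re + ε * ‖x‖^2 := by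
    have h2 : (inner ℂ (S x) (S x) : ℂ) = inner ℂ (Bε x) x := by
      calc (inner ℂ (S x) (S x) : ℂ) = inner ℂ (adjoint S (S x)) x :=
            (adjoint_inner_left S x (S x)).symm
        _ = inner ℂ (Bε x) x := by rw [hSadj, ← comp_apply, ← mul_def, hSS]
    have h3 : Bε x = B x + (ε : ℂ) • x := by
      rw [hBε, add_apply, Algebra.algebraMap_eq_smul_one, smul_apply, one_apply_eq_self,
        RCLike.real_smul_eq_coe_smul (K := ℂ)]
      norm_num
    have h4 : ‖S x‖^2 = RCLike.re (inner ℂ (S x) (S x) : ℂ) := norm_sq_eq_re_inner (𝕜 := ℂ) (S x)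
    have h5 : RCLike.re (inner ℂ x x : ℂ) = ‖x‖^2 := inner_self_eq_norm_sq (𝕜 := ℂ) x
    rw [RCLike.re_to_complex] at h4 h5
    have h6 : (inner ℂ x x : ℂ).im = 0 := inner_self_im (𝕜 := ℂ) x
    rw [h4, h2, h3, inner_add_left, inner_smul_left, Complex.add_re]
    simp [Complex.conj_ofReal, Complex.mul_re, h5, h6]
    left; rw [← Complex.ofReal_pow, Complex.ofReal_re]
  have hSy2 : ‖S y‖^2 = (inner ℂ (D x) x : ℂ).re := by
    have h2 : (inner ℂ (S y) (S y) : ℂ) = inner ℂ (D x) x := by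
      calc (inner ℂ (S y) (S y) : ℂ) = inner ℂ (adjoint S (S y)) y :=
            (adjoint_inner_left S y (S y)).symm
        _ = inner ℂ (Bε y) y := by rw [hSadj, ← comp_apply, ← mul_def, hSS]
        _ = inner ℂ (W (Bε y)) x := adjoint_inner_right W (Bε y) x
        _ = inner ℂ (D x) x := by
            have hvec : W (Bε y) = D x := by
              rw [← hD_eq]
              conv_rhs => rw [mul_apply_eq_comp, mul_apply_eq_comp]
              rw [hy, star_eq_adjoint]
            rw [hvec]
    have h4 : ‖S y‖^2 = RCLike.re (inner ℂ (S y) (S y) : ℂ) := norm_sq_eq_re_inner (𝕜 := ℂ) (S y)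
    rw [RCLike.re_to_complex] at h4
    rw [h4, h2]
  -- put it together
  have hDle : (inner ℂ (D x) x : ℂ).re ≤ (inner ℂ (B x) x : ℂ).re := my_inner_re_le hDB x
  have hD0' : 0 ≤ (inner ℂ (D x) x : ℂ).re := by
    have := my_inner_re_le hD0 x
    simpa using this
  have habs : ‖(inner ℂ (T x) x : ℂ)‖ ≤ ‖S x‖ * ‖S y‖ := by
    rw [e_T]
    exact norm_inner_le_norm (S x) (S y)
  have hBx0 : 0 ≤ (inner ℂ (B x) x : ℂ).re + ε * ‖x‖^2 := by
    rw [← hSx2]; positivity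
  calc (‖(inner ℂ (T x) x : ℂ)‖)^2 ≤ (‖S x‖ * ‖S y‖)^2 := by
        have h0 : 0 ≤ ‖(inner ℂ (T x) x : ℂ)‖ := norm_nonneg _
        nlinarith [habs, mul_nonneg (norm_nonneg (S x)) (norm_nonneg (S y))]
    _ = ‖S x‖^2 * ‖S y‖^2 := by ring
    _ = ((inner ℂ (B x) x : ℂ).re + ε * ‖x‖^2) * (inner ℂ (D x) x : ℂ).re := by
        rw [hSx2, hSy2]
    _ ≤ ((inner ℂ (B x) x : ℂ).re + ε * ‖x‖^2) * (inner ℂ (B x) x : ℂ).re := by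
        exact mul_le_mul_of_nonneg_left hDle hBx0


/-- If `T` is a hyponormal bounded operator on a complex Hilbert space (`T T* ≤ T* T`),
then `|⟨Tx, x⟩| ≤ ⟨|T|x, x⟩` for every `x`, where `|T|` (here called `B`) is the unique
positive square root of `T* T`. -/
theorem abs_inner_le_of_hyponormal
    {H : Type*} [NormedAddCommGroup H] [InnerProductSpace ℂ H] [CompleteSpace H]
    (T : H →L[ℂ] H)
    (hT : ∀ x : H, 0 ≤ (inner ℂ ((adjoint T ∘L T - T ∘L adjoint T) x) x : ℂ))
    (B : H →L[ℂ] H)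
    (hB : ∀ x : H, 0 ≤ (inner ℂ (B x) x : ℂ))
    (hB2 : B ∘L B = adjoint T ∘L T) :
    ∀ x : H, ‖(inner ℂ (T x) x : ℂ)‖ ≤ (inner ℂ (B x) x : ℂ).re := by
  intro x
  have hBpos : (0 : H →L[ℂ] H) ≤ B := my_nonneg_of_inner hB
  have hTT : T * star T ≤ star T * T := by
    rw [← sub_nonneg]
    have hop : star T * T - T * star T = adjoint T ∘L T - T ∘L adjoint T := by
      rw [star_eq_adjoint, mul_def, mul_def]
    rw [hop]
    exact my_nonneg_of_inner hT
  have hB2' : star T * T = B * B := by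
    rw [star_eq_adjoint, mul_def, mul_def, hB2]
  set c := (inner ℂ (B x) x : ℂ).re with hc
  have hc0 : 0 ≤ c := (Complex.nonneg_iff.mp (hB x)).1
  have key : ∀ ε : ℝ, 0 < ε →
      (‖(inner ℂ (T x) x : ℂ)‖)^2 ≤ (c + ε * ‖x‖^2) * c :=
    fun ε hε => abs_inner_le_of_hyponormal_key T B hBpos hTT hB2' x ε hε
  have habs2 : (‖(inner ℂ (T x) x : ℂ)‖)^2 ≤ c * c := by
    refine le_of_forall_pos_le_add fun η hη => ?_
    have hK0 : 0 ≤ ‖x‖^2 * c := by positivity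
    set K := ‖x‖^2 * c with hKdef
    have hKpos : 0 < K + 1 := by linarith
    have hεpos : 0 < η / (K + 1) := by positivity
    have h1 := key (η / (K + 1)) hεpos
    have h2 : (c + η / (K + 1) * ‖x‖^2) * c = c * c + η / (K + 1) * K := by
      rw [hKdef]; ring
    have h3 : η / (K + 1) * K ≤ η := by
      rw [div_mul_eq_mul_div, div_le_iff₀ hKpos]
      nlinarith
    calc (‖(inner ℂ (T x) x : ℂ)‖)^2 ≤ (c + η / (K + 1) * ‖x‖^2) * c := h1
      _ = c * c + η / (K + 1) * K := h2
      _ ≤ c * c + η := by linarith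
  have habs0 : 0 ≤ ‖(inner ℂ (T x) x : ℂ)‖ := norm_nonneg _
  nlinarith [habs2, habs0, hc0]

end CStarAux
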